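/- For every real number x ≥ 4, ln(1 + 1/x) − 1/(x·√x) ≥ 0. -/

import Mathlib

theorem f_nonneg (x : ℝ) (hx : x ≥ 4) :
    Real.log (1 + 1 / x) - 1 / (x * Real.sqrt x) ≥ 0 := by
  have hx0 : (0:ℝ) < x := by linarith
  have hs2 : Real.sqrt x ≥ 2 := by
    have : Real.sqrt 4 ≤ Real.sqrt x := Real.sqrt_le_sqrt hx
    have h4 : Real.sqrt 4 = 2 := by
      rw [show (4:ℝ) = 2^2 by norm_num, Real.sqrt_sq (by norm_num)]
    linarith
  have hxs : x * Real.sqrt x ≥ x + 1 := by nlinarith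
  -- log(1+1/x) ≥ 1/(x+1)
  have hlog : Real.log (1 + 1 / x) ≥ 1 / (x + 1) := by
    have hpos : (0:ℝ) < x / (x + 1) := by positivity
    have h1 := Real.log_le_sub_one_of_pos hpos
    have heq : Real.log (x / (x + 1)) = - Real.log (1 + 1 / x) := by
      rw [show (1 + 1 / x) = (x + 1) / x by field_simp,
        Real.log_div (by linarith) (by linarith),
        Real.log_div (by linarith) (by linarith)]
      ring
    rw [heq] at h1
    have : x / (x + 1) - 1 = - (1 / (x + 1)) := by field_simp; ring
    linarith
  have h2 : 1 / (x * Real.sqrt x) ≤ 1 / (x + 1) := by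
    apply one_div_le_one_div_of_le (by linarith) hxs
  linarith
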